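/- Let H be a Hilbert space, A: H → H nonexpansive (‖A(v)-A(v')‖ ≤ ‖v-v'‖ for all v,v'), and v₀ ∈ H such that ‖A^{n+1}(v₀) - A^n(v₀)‖ → 0 as n → ∞. If some subsequence (A^{n_k}(v₀)) converges weakly to v' ∈ H, then A(v') = v'. -/

import Mathlib

open Filter
open scoped Topology

/-- Demiclosedness: if `A` is nonexpansive on a Hilbert space, the successive
differences of the orbit of `v₀` tend to `0`, and some subsequence of the orbit
converges weakly to `v'`, then `v'` is a fixed point of `A`. -/
theorem stmt_8 {H : Type*} [NormedAddCommGroup H] [InnerProductSpace ℝ H] [CompleteSpace H]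
    (A : H → H) (hA : ∀ v v' : H, ‖A v - A v'‖ ≤ ‖v - v'‖) (v₀ : H)
    (hdiff : Tendsto (fun n => ‖A^[n + 1] v₀ - A^[n] v₀‖) atTop (𝓝 0))
    (nk : ℕ → ℕ) (hnk : StrictMono nk) (v' : H)
    (hweak : ∀ u : H,
      Tendsto (fun k => (inner ℝ u (A^[nk k] v₀) : ℝ)) atTop (𝓝 (inner ℝ u v' : ℝ))) :
    A v' = v' := by
  set x : ℕ → H := fun k => A^[nk k] v₀ with hx
  -- boundedness of x via Banach–Steinhaus
  obtain ⟨C, hC⟩ : ∃ C, ∀ k, ‖innerSL ℝ (x k)‖ ≤ C := by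
    apply banach_steinhaus
    intro u
    have h := Metric.isBounded_range_of_tendsto _ (hweak u)
    rw [isBounded_iff_forall_norm_le] at h
    obtain ⟨C, hC⟩ := h
    exact ⟨C, fun k => by
      simpa [innerSL_apply_apply, real_inner_comm] using hC _ ⟨k, rfl⟩⟩
  have hCx : ∀ k, ‖x k‖ ≤ C := fun k => by
    simpa [innerSL_apply_norm] using hC k
  -- εₖ := ‖A (x k) - x k‖ → 0
  have heps : Tendsto (fun k => ‖A (x k) - x k‖) atTop (𝓝 0) := by
    have := hdiff.comp hnk.tendsto_atTop
    simpa [Function.comp_def, Function.iterate_succ_apply'] using this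
  set b : H := v' - A v' with hb
  set M : ℝ := C + ‖v'‖ with hM
  have hxvM : ∀ k, ‖x k - v'‖ ≤ M := fun k =>
    (norm_sub_le _ _).trans (add_le_add_left (hCx k) _)
  -- inner (x k - v') b → 0
  have hinner : Tendsto (fun k => (inner ℝ (x k - v') b : ℝ)) atTop (𝓝 0) := by
    have h := (hweak b).sub_const (inner ℝ b v' : ℝ)
    rw [sub_self] at h
    refine h.congr fun k => ?_
    simp [hx, inner_sub_left, inner_sub_right, real_inner_comm b]
  -- key inequality
  have hkey : ∀ k, ‖b‖ ^ 2 ≤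
      ‖A (x k) - x k‖ ^ 2 + 2 * ‖A (x k) - x k‖ * M - 2 * (inner ℝ (x k - v') b : ℝ) := by
    intro k
    have h1 : ‖x k - A v'‖ ≤ ‖A (x k) - x k‖ + ‖x k - v'‖ := by
      calc ‖x k - A v'‖ ≤ ‖x k - A (x k)‖ + ‖A (x k) - A v'‖ := by
            simpa using norm_sub_le_norm_sub_add_norm_sub (x k) (A (x k)) (A v')
        _ ≤ ‖A (x k) - x k‖ + ‖x k - v'‖ := by
            rw [norm_sub_rev]
            exact add_le_add_right (hA _ _) _
    have h2 : ‖x k - A v'‖ ^ 2 =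
        ‖x k - v'‖ ^ 2 + 2 * (inner ℝ (x k - v') b : ℝ) + ‖b‖ ^ 2 := by
      have := norm_add_sq_real (x k - v') b
      rw [hb] at this ⊢
      rw [show x k - v' + (v' - A v') = x k - A v' by abel] at this
      exact this
    have h3 : ‖x k - A v'‖ ^ 2 ≤ (‖A (x k) - x k‖ + ‖x k - v'‖) ^ 2 := by
      have := norm_nonneg (x k - A v')
      nlinarith [norm_nonneg (x k - A v')]
    have h4 : ‖A (x k) - x k‖ * ‖x k - v'‖ ≤ ‖A (x k) - x k‖ * M :=
      mul_le_mul_of_nonneg_left (hxvM k) (norm_nonneg _)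
    nlinarith [h2, h3, h4]
  -- pass to the limit
  have hlim : Tendsto (fun k =>
      ‖A (x k) - x k‖ ^ 2 + 2 * ‖A (x k) - x k‖ * M - 2 * (inner ℝ (x k - v') b : ℝ))
      atTop (𝓝 0) := by
    have h1 : Tendsto (fun k => ‖A (x k) - x k‖ ^ 2) atTop (𝓝 0) := by
      simpa using heps.pow 2
    have h2 : Tendsto (fun k => 2 * ‖A (x k) - x k‖ * M) atTop (𝓝 0) := by
      have := (heps.const_mul 2).mul_const M
      simpa [mul_assoc] using this
    have h3 : Tendsto (fun k => 2 * (inner ℝ (x k - v') b : ℝ)) atTop (𝓝 0) := by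
      simpa using hinner.const_mul 2
    simpa using (h1.add h2).sub h3
  have hb0 : ‖b‖ ^ 2 ≤ 0 := ge_of_tendsto' hlim hkey
  have : b = 0 := by
    have := sq_nonneg ‖b‖
    have hn : ‖b‖ = 0 := by nlinarith
    simpa using hn
  rw [hb, sub_eq_zero] at this
  exact this.symm
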